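/- arXiv:0807.4418 — 2 statements merged into one kernel-verified Lean document; each statement's English description precedes it below -/
import Mathlib

section
/- For all x, y in the unit ball B^n, |x-y| ≤ 2 tanh(ρ(x,y)/4), where ρ is the hyperbolic metric of B^n; moreover 2 tanh(ρ(x,y)/4) = 2|x-y|/(sqrt(|x-y|^2+t^2)+t) with t = sqrt((1-|x|^2)(1-|y|^2)), and equality |x-y| = 2 tanh(ρ(x,y)/4) holds when x = -y. -/
/-- For `x, y` in the unit ball of `ℝⁿ`, with `t = √((1-‖x‖²)(1-‖y‖²))` and `ρ ≥ 0`
satisfying `tanh²(ρ/2) = ‖x-y‖²/(‖x-y‖²+t²)`, one has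
`‖x-y‖ ≤ 2 tanh(ρ/4)`, `2 tanh(ρ/4) = 2‖x-y‖/(√(‖x-y‖²+t²)+t)`, and equality
`‖x-y‖ = 2 tanh(ρ/4)` when `x = -y`. -/
theorem stmt_1 (n : ℕ) (x y : EuclideanSpace ℝ (Fin n))
    (hx : ‖x‖ < 1) (hy : ‖y‖ < 1) (t : ℝ)
    (ht : t = Real.sqrt ((1 - ‖x‖ ^ 2) * (1 - ‖y‖ ^ 2)))
    (ρ : ℝ) (hρ : 0 ≤ ρ)
    (htanh : Real.tanh (ρ / 2) ^ 2 = ‖x - y‖ ^ 2 / (‖x - y‖ ^ 2 + t ^ 2)) :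
    ‖x - y‖ ≤ 2 * Real.tanh (ρ / 4) ∧
    2 * Real.tanh (ρ / 4) =
      2 * ‖x - y‖ / (Real.sqrt (‖x - y‖ ^ 2 + t ^ 2) + t) ∧
    (x = -y → ‖x - y‖ = 2 * Real.tanh (ρ / 4)) := by
  set a := ‖x‖ with ha
  set b := ‖y‖ with hb
  set d := ‖x - y‖ with hd
  clear_value a b d
  have ha0 : 0 ≤ a := ha ▸ norm_nonneg _
  have hb0 : 0 ≤ b := hb ▸ norm_nonneg _
  have hd0 : 0 ≤ d := hd ▸ norm_nonneg _
  have hdab : d ≤ a + b := by rw [ha, hb, hd]; exact norm_sub_le _ _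
  have hA : (0:ℝ) < 1 - a ^ 2 := by nlinarith
  have hB : (0:ℝ) < 1 - b ^ 2 := by nlinarith
  have ht0 : 0 < t := by rw [ht]; positivity
  have ht2 : t ^ 2 = (1 - a ^ 2) * (1 - b ^ 2) := by
    rw [ht]; exact Real.sq_sqrt (by positivity)
  set s := Real.sqrt (d ^ 2 + t ^ 2) with hs
  have hs2 : s ^ 2 = d ^ 2 + t ^ 2 := Real.sq_sqrt (by positivity)
  have hs0 : 0 < s := by rw [hs]; positivity
  -- 2t ≤ (1-a²)+(1-b²)
  have h2t : 2 * t ≤ (1 - a ^ 2) + (1 - b ^ 2) := by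
    nlinarith [sq_nonneg ((1 - a ^ 2) - (1 - b ^ 2)), sq_nonneg ((1 - a ^ 2) + (1 - b ^ 2) - 2 * t)]
  have hst2 : s + t ≤ 2 := by
    have h1 : d ^ 2 + t ^ 2 ≤ (2 - t) ^ 2 := by nlinarith [sq_nonneg (a - b)]
    have h2t' : t ≤ 1 := by nlinarith
    have : s ≤ 2 - t := by
      rw [hs]
      calc Real.sqrt (d ^ 2 + t ^ 2) ≤ Real.sqrt ((2 - t) ^ 2) := Real.sqrt_le_sqrt h1
        _ = 2 - t := Real.sqrt_sq (by linarith)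
    linarith
  -- hyperbolic setup
  set c := Real.cosh (ρ / 4) with hc
  set sh := Real.sinh (ρ / 4) with hsh
  have hc0 : 0 < c := Real.cosh_pos _
  have hsh0 : 0 ≤ sh := by rw [hsh, ← Real.sinh_zero]; exact Real.sinh_le_sinh.mpr (by linarith)
  set C := Real.cosh (ρ / 2) with hC
  set S := Real.sinh (ρ / 2) with hS
  have hC0 : 0 < C := Real.cosh_pos _
  have hS0 : 0 ≤ S := by rw [hS, ← Real.sinh_zero]; exact Real.sinh_le_sinh.mpr (by linarith)
  have hCsq : C ^ 2 = S ^ 2 + 1 := Real.cosh_sq _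
  have hcsq : c ^ 2 = sh ^ 2 + 1 := Real.cosh_sq _
  have hhalf : (ρ / 2) = 2 * (ρ / 4) := by ring
  have hCd : C = c ^ 2 + sh ^ 2 := by rw [hC, hhalf, Real.cosh_two_mul]
  have hSd : S = 2 * sh * c := by rw [hS, hhalf, Real.sinh_two_mul]
  clear_value s c sh C S
  -- from htanh: S² s² = d² C²
  have htanh' : S ^ 2 * s ^ 2 = d ^ 2 * C ^ 2 := by
    have h1 : Real.tanh (ρ / 2) = S / C := by
      rw [hS, hC]; exact Real.tanh_eq_sinh_div_cosh _
    have h2 : S ^ 2 / C ^ 2 = d ^ 2 / s ^ 2 := by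
      rw [← div_pow, ← h1, htanh, hs2]
    exact (div_eq_div_iff (by positivity) (by positivity)).mp h2
  have hCt : C * t = s := by
    have hsq : (C * t) ^ 2 = s ^ 2 := by
      linear_combination htanh' - C ^ 2 * hs2 + s ^ 2 * hCsq
    have hz : (C * t - s) * (C * t + s) = 0 := by linear_combination hsq
    rcases mul_eq_zero.mp hz with h | h
    · linarith
    · exfalso; linarith [mul_pos hC0 ht0]
  have hSt : S * t = d := by
    have hsq : (S * t) ^ 2 = d ^ 2 := by
      linear_combination (-(t ^ 2)) * hCsq + (C * t + s) * hCt + hs2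
    have hz : (S * t - d) * (S * t + d) = 0 := by linear_combination hsq
    rcases mul_eq_zero.mp hz with h | h
    · linarith
    · linarith [mul_nonneg hS0 ht0.le]
  -- key identity: 2 tanh(ρ/4) = 2d/(s+t)
  have hst0 : 0 < s + t := by linarith
  have key0 : sh * (s + t) = d * c := by
    linear_combination (-sh) * hCt + c * hSt + (-(c * t)) * hSd + (sh * t) * hCd +
      (-(sh * t)) * hcsq
  have hkey : 2 * Real.tanh (ρ / 4) = 2 * d / (s + t) := by
    rw [Real.tanh_eq_sinh_div_cosh, ← hsh, ← hc, ← mul_div_assoc,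
      div_eq_div_iff hc0.ne' hst0.ne']
    linear_combination 2 * key0
  refine ⟨?_, by rw [hkey], ?_⟩
  · rw [hkey]
    rw [le_div_iff₀ hst0]
    have := mul_le_mul_of_nonneg_left hst2 hd0
    linarith
  · intro hxy
    have hab : a = b := by rw [ha, hb, hxy, norm_neg]
    have hd2b : d = 2 * b := by
      rw [hd, hxy]
      have h2 : -y - y = (-2 : ℝ) • y := by
        ext i; simp; ring
      rw [h2, norm_smul, ← hb]
      norm_num
    have htb : t = 1 - b ^ 2 := by
      rw [ht, hab, show (1 - b ^ 2) * (1 - b ^ 2) = (1 - b ^ 2) ^ 2 by ring,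
        Real.sqrt_sq hB.le]
    have hsb : s = 1 + b ^ 2 := by
      have h1 : d ^ 2 + t ^ 2 = (1 + b ^ 2) ^ 2 := by rw [hd2b, htb]; ring
      rw [hs, h1]
      exact Real.sqrt_sq (by positivity)
    rw [hkey, hsb, htb, hd2b]
    have hb1 : b < 1 := by rwa [hab] at hx
    field_simp
    ring
end

section
/- For all real K with 1 ≤ K ≤ 17, log(2^{3K-2} K^{2K} - 1) ≤ (4 + 6 log 2)(K - 1), with equality only for K = 1. -/
open Real Set

/-- `log x ≤ (x - 1/x)/2` for `x ≥ 1`. -/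
lemma stmt11_log_le_half (x : ℝ) (hx : 1 ≤ x) : Real.log x ≤ (x - 1/x) / 2 := by
  have h0 : 0 < x := by linarith
  rcases eq_or_lt_of_le hx with h | h
  · rw [← h]; simp
  · have hlog : 0 < Real.log x := Real.log_pos h
    have hs : Real.log x < Real.sinh (Real.log x) := Real.self_lt_sinh_iff.mpr hlog
    rw [Real.sinh_log h0] at hs
    rw [one_div]
    linarith

/-- `1 - 1/x ≤ log x` for `x > 0`. -/
lemma stmt11_one_sub_le_log (x : ℝ) (hx : 0 < x) : 1 - 1/x ≤ Real.log x := by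
  have := Real.log_le_sub_one_of_pos (inv_pos.mpr hx)
  rw [Real.log_inv] at this
  rw [one_div]
  linarith

noncomputable def stmt11_u (K : ℝ) : ℝ := (3*K - 2) * Real.log 2 + 2*K*Real.log K

noncomputable def stmt11_psi (K : ℝ) : ℝ :=
  Real.log (4 + 6*Real.log 2) + (4 + 6*Real.log 2)*(K - 1) - stmt11_u K
    - Real.log (2 + 3*Real.log 2 + 2*Real.log K)

noncomputable def stmt11_psi1 (K : ℝ) : ℝ :=
  (4 + 6*Real.log 2) - (3*Real.log 2 + (2*Real.log K + 2))
    - 2 / (K * (2 + 3*Real.log 2 + 2*Real.log K))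

noncomputable def stmt11_psi2 (K : ℝ) : ℝ :=
  -(2/K) + 2*((2 + 3*Real.log 2 + 2*Real.log K) + 2)
      / (K * (2 + 3*Real.log 2 + 2*Real.log K))^2

noncomputable def stmt11_phi (K : ℝ) : ℝ :=
  Real.exp ((4 + 6*Real.log 2)*(K - 1)) + 1 - Real.exp (stmt11_u K)

noncomputable def stmt11_phi1 (K : ℝ) : ℝ :=
  Real.exp ((4 + 6*Real.log 2)*(K - 1)) * (4 + 6*Real.log 2)
    - Real.exp (stmt11_u K) * (3*Real.log 2 + (2*Real.log K + 2))

lemma stmt11_vpos {K : ℝ} (hK : (1/2:ℝ) < K) : 0 < 2 + 3*Real.log 2 + 2*Real.log K := by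
  have hL : (0.6931471803:ℝ) < Real.log 2 := Real.log_two_gt_d9
  have h : Real.log (1/2) < Real.log K := Real.log_lt_log (by norm_num) hK
  rw [one_div, Real.log_inv] at h
  nlinarith

lemma stmt11_hu {K : ℝ} (hK : (0:ℝ) < K) :
    HasDerivAt stmt11_u (3*Real.log 2 + (2*Real.log K + 2)) K := by
  have h1 : HasDerivAt (fun K : ℝ => (3*K - 2) * Real.log 2) (3*Real.log 2) K := by
    simpa using (((hasDerivAt_id K).const_mul 3).sub_const 2).mul_const (Real.log 2)
  have h2 : HasDerivAt (fun K : ℝ => 2*K*Real.log K) (2*Real.log K + 2) K := by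
    have hmul : HasDerivAt (fun K : ℝ => K * Real.log K) (Real.log K + 1) K := by
      exact ((hasDerivAt_id' K).mul (Real.hasDerivAt_log hK.ne')).congr_deriv (by rw [one_mul, mul_inv_cancel₀ hK.ne'])
    have e : (fun K : ℝ => 2*K*Real.log K) = fun K : ℝ => 2*(K*Real.log K) := by
      funext x; ring
    rw [e, show 2*Real.log K + 2 = 2*(Real.log K + 1) by ring]
    exact hmul.const_mul 2
  exact h1.add h2

lemma stmt11_hv {K : ℝ} (hK : (0:ℝ) < K) :
    HasDerivAt (fun K : ℝ => 2 + 3*Real.log 2 + 2*Real.log K) (2/K) K := by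
  have h := ((Real.hasDerivAt_log hK.ne').const_mul 2).const_add (2 + 3*Real.log 2)
  simpa [div_eq_mul_inv] using h

lemma stmt11_hpsi {K : ℝ} (hK : (1/2:ℝ) < K) :
    HasDerivAt stmt11_psi (stmt11_psi1 K) K := by
  have hK0 : (0:ℝ) < K := by linarith
  have hvpos := stmt11_vpos hK
  have h1 : HasDerivAt (fun K : ℝ => Real.log (4 + 6*Real.log 2)
      + (4 + 6*Real.log 2)*(K - 1)) (4 + 6*Real.log 2) K := by
    simpa using (((hasDerivAt_id K).sub_const 1).const_mul (4 + 6*Real.log 2)).const_add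
      (Real.log (4 + 6*Real.log 2))
  have h2 := stmt11_hu hK0
  have h3 := (stmt11_hv hK0).log hvpos.ne'
  have h := (h1.sub h2).sub h3
  refine h.congr_deriv ?_
  unfold stmt11_psi1
  rw [div_div]

lemma stmt11_hD {K : ℝ} (hK : (0:ℝ) < K) :
    HasDerivAt (fun K : ℝ => K * (2 + 3*Real.log 2 + 2*Real.log K))
      ((2 + 3*Real.log 2 + 2*Real.log K) + 2) K := by
  have h := (hasDerivAt_id K).mul (stmt11_hv hK)
  refine h.congr_deriv ?_
  simp only [id, one_mul]
  rw [show K * (2 / K) = 2 by field_simp]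

lemma stmt11_hpsi1 {K : ℝ} (hK : (1/2:ℝ) < K) :
    HasDerivAt stmt11_psi1 (stmt11_psi2 K) K := by
  have hK0 : (0:ℝ) < K := by linarith
  have hvpos := stmt11_vpos hK
  have hDpos : 0 < K * (2 + 3*Real.log 2 + 2*Real.log K) := mul_pos hK0 hvpos
  have h1 : HasDerivAt (fun K : ℝ => 3*Real.log 2 + (2*Real.log K + 2)) (2/K) K := by
    have h := (((Real.hasDerivAt_log hK0.ne').const_mul 2).add_const 2).const_add (3*Real.log 2)
    simpa [div_eq_mul_inv] using h
  have h2 := ((stmt11_hD hK0).inv hDpos.ne').const_mul 2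
  have h := ((hasDerivAt_const K (4 + 6*Real.log 2)).sub h1).sub h2
  have e : (fun x : ℝ => 4 + 6*Real.log 2 - (3*Real.log 2 + (2*Real.log x + 2))
      - 2*(x*(2 + 3*Real.log 2 + 2*Real.log x))⁻¹) = stmt11_psi1 := by
    funext x; simp only [stmt11_psi1, div_eq_mul_inv]
  rw [← e]
  refine h.congr_deriv ?_
  unfold stmt11_psi2
  ring

lemma stmt11_hphi {K : ℝ} (hK : (0:ℝ) < K) :
    HasDerivAt stmt11_phi (stmt11_phi1 K) K := by
  have h1 : HasDerivAt (fun K : ℝ => (4 + 6*Real.log 2)*(K - 1)) (4 + 6*Real.log 2) K := by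
    simpa using ((hasDerivAt_id K).sub_const 1).const_mul (4 + 6*Real.log 2)
  have h2 := (h1.exp.add_const 1).sub (stmt11_hu hK).exp
  exact h2

lemma stmt11_psi_one : stmt11_psi 1 = 0 := by
  have hL : (0.6931471803:ℝ) < Real.log 2 := Real.log_two_gt_d9
  have h4 : (4 + 6*Real.log 2 : ℝ) = 2 * (2 + 3*Real.log 2) := by ring
  unfold stmt11_psi stmt11_u
  rw [Real.log_one, h4, Real.log_mul (by norm_num) (by nlinarith)]
  ring

lemma stmt11_psi_17 : 0 < stmt11_psi 17 := by
  have hL : (0.6931471803:ℝ) < Real.log 2 := Real.log_two_gt_d9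
  have hL' : Real.log 2 < 0.6931471808 := Real.log_two_lt_d9
  -- log 17 = 4 log 2 + log (17/16)
  have h17 : Real.log 17 = 4*Real.log 2 + Real.log (17/16) := by
    rw [show (17:ℝ) = 2^4 * (17/16) by norm_num,
      Real.log_mul (by norm_num) (by norm_num), Real.log_pow]
    push_cast; ring
  have hm : Real.log (17/16) ≤ 33/544 := by
    have := stmt11_log_le_half (17/16) (by norm_num)
    linarith [this, show ((17:ℝ)/16 - 1/(17/16))/2 = 33/544 by norm_num]
  have hm0 : 0 ≤ Real.log (17/16) := Real.log_nonneg (by norm_num)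
  -- lower bound for log (2 + 3 log 2)
  have hapos : (0:ℝ) < 2 + 3*Real.log 2 := by nlinarith
  have hloga : 2*0.6931471803 + (1 - 4/(2+3*0.6931471803)) ≤ Real.log (2 + 3*Real.log 2) := by
    have e1 : (2 + 3*Real.log 2 : ℝ) = 2^2 * ((2 + 3*Real.log 2)/4) := by ring
    have h2 : (0:ℝ) < (2 + 3*Real.log 2)/4 := by linarith
    have hlow := stmt11_one_sub_le_log ((2 + 3*Real.log 2)/4) h2
    rw [e1, Real.log_mul (by norm_num) h2.ne', Real.log_pow]
    have hfrac : 1/((2 + 3*Real.log 2)/4) ≤ 4/(2+3*0.6931471803) := by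
      rw [one_div, inv_div]
      apply div_le_div_of_nonneg_left (by norm_num) (by norm_num) (by linarith)
    push_cast
    nlinarith
  -- upper bound for log (2 + 3 log 2 + 2 log 17)
  have hXval : (2 + 3*Real.log 2 + 2*Real.log 17 : ℝ) ≤ 2 + 11*0.6931471808 + 33/272 := by
    rw [h17]; linarith
  have hXpos : (0:ℝ) < 2 + 3*Real.log 2 + 2*Real.log 17 := by
    rw [h17]; nlinarith
  have hlogX : Real.log (2 + 3*Real.log 2 + 2*Real.log 17)
      ≤ 3*0.6931471808 + ((2 + 11*0.6931471808 + 33/272)/8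
          - 8/(2 + 11*0.6931471808 + 33/272))/2 := by
    have h1 : Real.log (2 + 3*Real.log 2 + 2*Real.log 17)
        ≤ Real.log (2 + 11*0.6931471808 + 33/272) :=
      Real.log_le_log hXpos hXval
    have e1 : (2 + 11*0.6931471808 + 33/272 : ℝ)
        = 2^3 * ((2 + 11*0.6931471808 + 33/272)/8) := by norm_num
    have h2 := stmt11_log_le_half ((2 + 11*0.6931471808 + 33/272)/8) (by norm_num)
    rw [e1, Real.log_mul (by norm_num) (by norm_num), Real.log_pow] at h1
    have h3 : (3:ℝ) * Real.log 2 ≤ 3*0.6931471808 := by linarith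
    have e2 : 1/((2 + 11*0.6931471808 + 33/272 : ℝ)/8)
        = 8/(2 + 11*0.6931471808 + 33/272) := by norm_num
    rw [e2] at h2
    push_cast at h1
    linarith
  unfold stmt11_psi stmt11_u
  rw [show (4 + 6*Real.log 2 : ℝ) = 2 * (2 + 3*Real.log 2) by ring,
    Real.log_mul (by norm_num) hapos.ne']
  rw [h17] at hlogX ⊢
  nlinarith [hm, hloga, hlogX, hm0]

/-- For `1 ≤ K ≤ 17`, `log(2^{3K-2} K^{2K} - 1) ≤ (4 + 6 log 2)(K - 1)`,
with equality only for `K = 1`. -/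
theorem stmt_11 (K : ℝ) (hK1 : 1 ≤ K) (hK17 : K ≤ 17) :
    Real.log ((2 : ℝ) ^ (3 * K - 2) * K ^ (2 * K) - 1) ≤
      (4 + 6 * Real.log 2) * (K - 1) ∧
    (Real.log ((2 : ℝ) ^ (3 * K - 2) * K ^ (2 * K) - 1) =
      (4 + 6 * Real.log 2) * (K - 1) → K = 1) := by
  have hL : (0.6931471803:ℝ) < Real.log 2 := Real.log_two_gt_d9
  rcases eq_or_lt_of_le hK1 with h1 | h1
  · constructor
    · rw [← h1]
      rw [show (3*(1:ℝ)-2) = 1 by norm_num, Real.rpow_one, show (2*(1:ℝ)) = 2 by norm_num,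
        Real.one_rpow]
      norm_num
    · intro _; exact h1.symm
  · -- 1 < K : establish the strict inequality
    have hconc : StrictConcaveOn ℝ (Icc (1:ℝ) 17) stmt11_psi := by
      apply strictConcaveOn_of_deriv2_neg (convex_Icc 1 17)
      · intro x hx
        exact (stmt11_hpsi (by linarith [hx.1] : (1/2:ℝ) < x)).continuousAt.continuousWithinAt
      · intro x hx
        rw [interior_Icc] at hx
        have hx1 : (1:ℝ) < x := hx.1
        have hhalf : (1/2:ℝ) < x := by linarith
        have hev : deriv stmt11_psi =ᶠ[nhds x] stmt11_psi1 := by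
          filter_upwards [Ioi_mem_nhds (show (1/2:ℝ) < x by linarith)] with y hy
          exact (stmt11_hpsi hy).deriv
        have h2 : deriv^[2] stmt11_psi x = stmt11_psi2 x := by
          show deriv (deriv stmt11_psi) x = stmt11_psi2 x
          rw [hev.deriv_eq, (stmt11_hpsi1 hhalf).deriv]
        rw [h2]
        unfold stmt11_psi2
        have hv := stmt11_vpos hhalf
        have hlogx : 0 ≤ Real.log x := Real.log_nonneg hx1.le
        have hv4 : 4 < 2 + 3*Real.log 2 + 2*Real.log x := by nlinarith
        have hvv : (2 + 3*Real.log 2 + 2*Real.log x) + 2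
            < (2 + 3*Real.log 2 + 2*Real.log x)^2 := by nlinarith
        have hxx : x ≤ x^2 := by nlinarith
        have t1 : ((2 + 3*Real.log 2 + 2*Real.log x) + 2)*x
            < (2 + 3*Real.log 2 + 2*Real.log x)^2*x :=
          mul_lt_mul_of_pos_right hvv (by linarith)
        have t2 : (2 + 3*Real.log 2 + 2*Real.log x)^2*x
            ≤ (2 + 3*Real.log 2 + 2*Real.log x)^2*x^2 :=
          mul_le_mul_of_nonneg_left hxx (by positivity)
        have hfrac : 2*((2 + 3*Real.log 2 + 2*Real.log x) + 2)
            / (x*(2 + 3*Real.log 2 + 2*Real.log x))^2 < 2/x := by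
          rw [div_lt_div_iff₀ (by positivity) (by linarith)]
          nlinarith [t1, t2]
        linarith
    have hpsiPos : ∀ x, 1 < x → x ≤ 17 → 0 < stmt11_psi x := by
      intro x hx1 hx17
      have hcc := hconc.concaveOn.2 (show (1:ℝ) ∈ Icc (1:ℝ) 17 by
          constructor <;> norm_num)
        (show (17:ℝ) ∈ Icc (1:ℝ) 17 by constructor <;> norm_num)
        (show (0:ℝ) ≤ (17-x)/16 by linarith) (show (0:ℝ) ≤ (x-1)/16 by linarith)
        (by ring)
      rw [smul_eq_mul, smul_eq_mul, smul_eq_mul, smul_eq_mul] at hcc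
      rw [show (17-x)/16 * 1 + (x-1)/16 * 17 = x by ring, stmt11_psi_one] at hcc
      have hp : 0 < (x-1)/16 * stmt11_psi 17 := mul_pos (by linarith) stmt11_psi_17
      linarith
    have hphiMono : StrictMonoOn stmt11_phi (Icc (1:ℝ) 17) := by
      apply strictMonoOn_of_deriv_pos (convex_Icc 1 17)
      · intro x hx
        exact (stmt11_hphi (by linarith [hx.1] : (0:ℝ) < x)).continuousAt.continuousWithinAt
      · intro x hx
        rw [interior_Icc] at hx
        rw [(stmt11_hphi (by linarith [hx.1] : (0:ℝ) < x)).deriv]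
        have hpos := hpsiPos x hx.1 hx.2.le
        have hv := stmt11_vpos (by linarith [hx.1] : (1/2:ℝ) < x)
        have hc : (0:ℝ) < 4 + 6*Real.log 2 := by linarith
        have hkey : Real.exp (stmt11_u x + Real.log (2 + 3*Real.log 2 + 2*Real.log x))
            < Real.exp (Real.log (4 + 6*Real.log 2) + (4 + 6*Real.log 2)*(x-1)) := by
          apply Real.exp_lt_exp.mpr
          unfold stmt11_psi at hpos
          linarith
        rw [Real.exp_add, Real.exp_add, Real.exp_log hv, Real.exp_log hc] at hkey
        unfold stmt11_phi1
        nlinarith [hkey]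
    have hphiK : 0 < stmt11_phi K := by
      have hm := hphiMono (show (1:ℝ) ∈ Icc (1:ℝ) 17 by constructor <;> norm_num)
        (show K ∈ Icc (1:ℝ) 17 from ⟨hK1, hK17⟩) h1
      have h0 : stmt11_phi 1 = 0 := by
        unfold stmt11_phi stmt11_u
        rw [show ((4:ℝ) + 6*Real.log 2)*(1-1) = 0 by ring, Real.exp_zero]
        rw [show ((3:ℝ)*1-2)*Real.log 2 + 2*1*Real.log 1 = Real.log 2 by
          rw [Real.log_one]; ring]
        rw [Real.exp_log (by norm_num : (0:ℝ) < 2)]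
        ring
      linarith
    have hK0 : (0:ℝ) < K := by linarith
    have hfK : (2:ℝ)^(3*K-2) * K^(2*K) = Real.exp (stmt11_u K) := by
      rw [Real.rpow_def_of_pos (by norm_num : (0:ℝ) < 2) (3*K-2),
        Real.rpow_def_of_pos hK0 (2*K), ← Real.exp_add]
      unfold stmt11_u
      ring_nf
    have hupos : 0 < stmt11_u K := by
      unfold stmt11_u
      have hlk : 0 ≤ Real.log K := Real.log_nonneg hK1
      nlinarith
    have hgt1 : (1:ℝ) < Real.exp (stmt11_u K) := by
      calc (1:ℝ) = Real.exp 0 := Real.exp_zero.symm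
      _ < Real.exp (stmt11_u K) := Real.exp_lt_exp.mpr hupos
    have hlt : Real.exp (stmt11_u K) - 1 < Real.exp ((4 + 6*Real.log 2)*(K-1)) := by
      unfold stmt11_phi at hphiK
      linarith
    have key : Real.log ((2:ℝ)^(3*K-2) * K^(2*K) - 1) < (4 + 6*Real.log 2)*(K-1) := by
      rw [hfK]
      calc Real.log (Real.exp (stmt11_u K) - 1)
          < Real.log (Real.exp ((4 + 6*Real.log 2)*(K-1))) :=
            Real.log_lt_log (by linarith) hlt
        _ = (4 + 6*Real.log 2)*(K-1) := Real.log_exp _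
    exact ⟨key.le, fun h => absurd h key.ne⟩
end
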